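/- Let A, B, C be three non-collinear points in the Euclidean plane ℝ², let O be the circumcenter and R the circumradius of triangle ABC, and let u, v, w be the distances from O to the lines BC, CA and AB respectively. If the triangle is acute (all three angles < π/2), then R³ − (u² + v² + w²)·R − 2uvw = 0; if the triangle is obtuse (one angle > π/2), then R³ − (u² + v² + w²)·R + 2uvw = 0; and if the triangle has a right angle, then R² = u² + v² + w². -/

import Mathlib

open Metric Real EuclideanGeometry RealInnerProductSpace

private lemma inner_pos_of_angle_lt {E : Type*} [NormedAddCommGroup E]
    [InnerProductSpace ℝ E] {x y : E} (hx : x ≠ 0) (hy : y ≠ 0)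
    (h : InnerProductGeometry.angle x y < π / 2) : 0 < ⟪x, y⟫ := by
  rw [← InnerProductGeometry.cos_angle_mul_norm_mul_norm]
  have h0 := InnerProductGeometry.angle_nonneg x y
  have hc : 0 < Real.cos (InnerProductGeometry.angle x y) :=
    Real.cos_pos_of_mem_Ioo ⟨by nlinarith [Real.pi_pos], h⟩
  exact mul_pos hc (mul_pos (norm_pos_iff.mpr hx) (norm_pos_iff.mpr hy))

private lemma inner_neg_of_angle_gt {E : Type*} [NormedAddCommGroup E]
    [InnerProductSpace ℝ E] {x y : E} (hx : x ≠ 0) (hy : y ≠ 0)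
    (h : π / 2 < InnerProductGeometry.angle x y) : ⟪x, y⟫ < 0 := by
  rw [← InnerProductGeometry.cos_angle_mul_norm_mul_norm]
  have h1 := InnerProductGeometry.angle_le_pi x y
  have hc : Real.cos (InnerProductGeometry.angle x y) < 0 :=
    Real.cos_neg_of_pi_div_two_lt_of_lt h (by nlinarith [Real.pi_pos])
  exact mul_neg_of_neg_of_pos hc (mul_pos (norm_pos_iff.mpr hx) (norm_pos_iff.mpr hy))

private lemma infDist_line_sq {E : Type*} [NormedAddCommGroup E] [InnerProductSpace ℝ E]
    {O B C : E} {R : ℝ} (hB : dist O B = R) (hC : dist O C = R) :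
    (infDist O (affineSpan ℝ {B, C} : Set E)) ^ 2 = (R ^ 2 + ⟪B - O, C - O⟫) / 2 := by
  set b : E := B - O with hbdef
  set c : E := C - O with hcdef
  have hbb : ⟪b, b⟫ = R ^ 2 := by
    rw [hbdef, real_inner_self_eq_norm_sq, ← dist_eq_norm, dist_comm, hB]
  have hcc : ⟪c, c⟫ = R ^ 2 := by
    rw [hcdef, real_inner_self_eq_norm_sq, ← dist_eq_norm, dist_comm, hC]
  set M : E := (2⁻¹ : ℝ) • (B + C) with hMdef
  have hM : M ∈ (affineSpan ℝ {B, C} : Set E) := by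
    have h1 := smul_vsub_vadd_mem_affineSpan_pair (2⁻¹ : ℝ) B C
    have h2 : (2⁻¹ : ℝ) • (C -ᵥ B) +ᵥ B = M := by
      rw [hMdef, vsub_eq_sub, vadd_eq_add]; module
    rwa [h2] at h1
  have hOM : O - M = -((2⁻¹ : ℝ) • (b + c)) := by rw [hMdef, hbdef, hcdef]; module
  have hCB : C - B = c - b := by rw [hbdef, hcdef]; abel
  have hperp : ⟪O - M, C - B⟫ = 0 := by
    rw [hOM, hCB]
    simp only [inner_neg_left, real_inner_smul_left, inner_add_left, inner_sub_right, hbb, hcc,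
      real_inner_comm c b]
    ring
  have hdM : dist O M ^ 2 = (R ^ 2 + ⟪b, c⟫) / 2 := by
    rw [dist_eq_norm O M, ← real_inner_self_eq_norm_sq, hOM]
    simp only [inner_neg_neg, real_inner_smul_left, real_inner_smul_right, inner_add_left,
      inner_add_right, hbb, hcc, real_inner_comm c b]
    ring
  have hle : ∀ p ∈ (affineSpan ℝ {B, C} : Set E), dist O M ≤ dist O p := by
    intro p hp
    have hp' : (p - B) +ᵥ B ∈ affineSpan ℝ ({B, C} : Set E) := by
      simpa [vadd_eq_add, sub_add_cancel] using hp
    obtain ⟨r, hr⟩ := vadd_left_mem_affineSpan_pair.mp hp'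
    rw [vsub_eq_sub] at hr
    have hOp : O - p = (O - M) + (2⁻¹ - r) • (C - B) := by
      have hpe : p = r • (C - B) + B := by rw [hr]; abel
      rw [hpe, hMdef]; module
    have hsq : dist O p ^ 2 = dist O M ^ 2 + (2⁻¹ - r) ^ 2 * ⟪C - B, C - B⟫ := by
      rw [dist_eq_norm O p, dist_eq_norm O M, ← real_inner_self_eq_norm_sq,
        ← real_inner_self_eq_norm_sq, hOp]
      simp only [inner_add_left, inner_add_right, real_inner_smul_left, real_inner_smul_right,
        hperp, real_inner_comm (C - B) (O - M)]
      rw [real_inner_comm (C - B) (O - M)] at hperp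
      simp only [hperp]
      ring
    nlinarith [dist_nonneg (x := O) (y := p), dist_nonneg (x := O) (y := M),
      real_inner_self_nonneg (x := C - B), sq_nonneg (2⁻¹ - r)]
  have heq : infDist O (affineSpan ℝ {B, C} : Set E) = dist O M := by
    refine le_antisymm (infDist_le_dist_of_mem hM) ?_
    by_contra hlt
    push_neg at hlt
    obtain ⟨q, hq, hq2⟩ := (infDist_lt_iff ⟨M, hM⟩).mp hlt
    exact absurd (hle q hq) (by linarith)
  rw [heq, hdM]

set_option maxHeartbeats 1000000 in
theorem circumradius_cubic (A B C O : EuclideanSpace ℝ (Fin 2)) (R u v w : ℝ)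
    (h : ¬ Collinear ℝ ({A, B, C} : Set (EuclideanSpace ℝ (Fin 2))))
    (hA : dist O A = R) (hB : dist O B = R) (hC : dist O C = R)
    (hu : u = infDist O (affineSpan ℝ {B, C} : Set (EuclideanSpace ℝ (Fin 2))))
    (hv : v = infDist O (affineSpan ℝ {C, A} : Set (EuclideanSpace ℝ (Fin 2))))
    (hw : w = infDist O (affineSpan ℝ {A, B} : Set (EuclideanSpace ℝ (Fin 2)))) :
    ((∠ B A C < π / 2 ∧ ∠ A B C < π / 2 ∧ ∠ A C B < π / 2) →
      R ^ 3 - (u ^ 2 + v ^ 2 + w ^ 2) * R - 2 * u * v * w = 0) ∧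
    ((∠ B A C > π / 2 ∨ ∠ A B C > π / 2 ∨ ∠ A C B > π / 2) →
      R ^ 3 - (u ^ 2 + v ^ 2 + w ^ 2) * R + 2 * u * v * w = 0) ∧
    ((∠ B A C = π / 2 ∨ ∠ A B C = π / 2 ∨ ∠ A C B = π / 2) →
      R ^ 2 = u ^ 2 + v ^ 2 + w ^ 2) := by
  have hAB : A ≠ B := by
    rintro rfl
    exact h ((collinear_pair ℝ A C).subset (by intro p hp; simp at hp ⊢; tauto))
  have hAC : A ≠ C := by
    rintro rfl
    exact h ((collinear_pair ℝ A B).subset (by intro p hp; simp at hp ⊢; tauto))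
  have hBC : B ≠ C := by
    rintro rfl
    exact h ((collinear_pair ℝ A B).subset (by intro p hp; simp at hp ⊢; tauto))
  set a : EuclideanSpace ℝ (Fin 2) := A - O with hadef
  set b : EuclideanSpace ℝ (Fin 2) := B - O with hbdef
  set c : EuclideanSpace ℝ (Fin 2) := C - O with hcdef
  set x : ℝ := ⟪b, c⟫ with hxdef
  set y : ℝ := ⟪c, a⟫ with hydef
  set z : ℝ := ⟪a, b⟫ with hzdef
  have haa : ⟪a, a⟫ = R ^ 2 := by
    rw [real_inner_self_eq_norm_sq, ← dist_eq_norm, dist_comm, hA]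
  have hbb : ⟪b, b⟫ = R ^ 2 := by
    rw [real_inner_self_eq_norm_sq, ← dist_eq_norm, dist_comm, hB]
  have hcc : ⟪c, c⟫ = R ^ 2 := by
    rw [real_inner_self_eq_norm_sq, ← dist_eq_norm, dist_comm, hC]
  have hu2 : u ^ 2 = (R ^ 2 + x) / 2 := by rw [hu, hxdef]; exact infDist_line_sq hB hC
  have hv2 : v ^ 2 = (R ^ 2 + y) / 2 := by rw [hv, hydef]; exact infDist_line_sq hC hA
  have hw2 : w ^ 2 = (R ^ 2 + z) / 2 := by rw [hw, hzdef]; exact infDist_line_sq hA hB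
  have hu0 : 0 ≤ u := hu ▸ infDist_nonneg
  have hv0 : 0 ≤ v := hv ▸ infDist_nonneg
  have hw0 : 0 ≤ w := hw ▸ infDist_nonneg
  have hR0 : 0 ≤ R := hA ▸ dist_nonneg
  have hR : 0 < R := by
    rcases hR0.lt_or_eq with h' | h'
    · exact h'
    · exfalso
      apply hAB
      have h1 : A = O := by rwa [← h', dist_comm, dist_eq_zero] at hA
      have h2 : B = O := by rwa [← h', dist_comm, dist_eq_zero] at hB
      rw [h1, h2]
  have hside : ∀ P Q : EuclideanSpace ℝ (Fin 2), P ≠ Q →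
      ∀ p q : EuclideanSpace ℝ (Fin 2), p = P - O → q = Q - O →
      ⟪p, p⟫ = R ^ 2 → ⟪q, q⟫ = R ^ 2 → 0 < R ^ 2 - ⟪p, q⟫ := by
    intro P Q hPQ p q hp hq hPi hQi
    have hne : P - Q ≠ 0 := sub_ne_zero.mpr hPQ
    have hpos : 0 < ⟪P - Q, P - Q⟫ := by
      rw [real_inner_self_eq_norm_sq]
      exact pow_pos (norm_pos_iff.mpr hne) 2
    have hPQ' : P - Q = p - q := by rw [hp, hq]; abel
    rw [hPQ'] at hpos
    simp only [inner_sub_left, inner_sub_right, hPi, hQi, real_inner_comm q p] at hpos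
    rw [real_inner_comm q p]
    linarith
  have hRx : 0 < R ^ 2 - x := hside B C hBC b c hbdef hcdef hbb hcc
  have hRy : 0 < R ^ 2 - y := hside C A hAC.symm c a hcdef hadef hcc haa
  have hRz : 0 < R ^ 2 - z := hside A B hAB a b hadef hbdef haa hbb
  -- inner products at the vertices
  have hpA : ⟪B - A, C - A⟫ = R ^ 2 + x - y - z := by
    have e1 : B - A = (b) - (a) := by simp only [hadef, hbdef, hcdef]; abel
    have e2 : C - A = (c) - (a) := by simp only [hadef, hbdef, hcdef]; abel
    rw [e1, e2]
    simp only [inner_sub_left, inner_sub_right, haa]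
    rw [← hxdef, (real_inner_comm a b).trans hzdef.symm,
      (real_inner_comm c a).trans hydef.symm]
    ring
  have hpB : ⟪A - B, C - B⟫ = R ^ 2 + y - x - z := by
    have e1 : A - B = (a) - (b) := by simp only [hadef, hbdef, hcdef]; abel
    have e2 : C - B = (c) - (b) := by simp only [hadef, hbdef, hcdef]; abel
    rw [e1, e2]
    simp only [inner_sub_left, inner_sub_right, hbb]
    rw [← hxdef, ← hzdef, (real_inner_comm c a).trans hydef.symm]
    ring
  have hpC : ⟪A - C, B - C⟫ = R ^ 2 + z - x - y := by
    have e1 : A - C = (a) - (c) := by simp only [hadef, hbdef, hcdef]; abel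
    have e2 : B - C = (b) - (c) := by simp only [hadef, hbdef, hcdef]; abel
    rw [e1, e2]
    simp only [inner_sub_left, inner_sub_right, hcc]
    rw [← hzdef, (real_inner_comm c a).trans hydef.symm,
      (real_inner_comm b c).trans hxdef.symm]
    ring
  -- angles as vector angles
  have hangA : ∠ B A C = InnerProductGeometry.angle (B - A) (C - A) := rfl
  have hangB : ∠ A B C = InnerProductGeometry.angle (A - B) (C - B) := rfl
  have hangC : ∠ A C B = InnerProductGeometry.angle (A - C) (B - C) := rfl
  have hnBA : B - A ≠ 0 := sub_ne_zero.mpr hAB.symm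
  have hnCA : C - A ≠ 0 := sub_ne_zero.mpr hAC.symm
  have hnAB : A - B ≠ 0 := sub_ne_zero.mpr hAB
  have hnCB : C - B ≠ 0 := sub_ne_zero.mpr hBC.symm
  have hnACv : A - C ≠ 0 := sub_ne_zero.mpr hAC
  have hnBCv : B - C ≠ 0 := sub_ne_zero.mpr hBC
  -- Gram determinant vanishes
  have hfin : ¬ LinearIndependent ℝ ![a, b, c] := by
    intro hli
    have hcard := hli.fintype_card_le_finrank
    rw [finrank_euclideanSpace_fin] at hcard
    simp at hcard
  obtain ⟨g, hg0, i, hgi⟩ := Fintype.not_linearIndependent_iff.mp hfin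
  rw [Fin.sum_univ_three] at hg0
  simp only [Matrix.cons_val_zero, Matrix.cons_val_one, Matrix.head_cons, Matrix.cons_val_two, Matrix.tail_cons] at hg0
  have hinner : ∀ q : EuclideanSpace ℝ (Fin 2),
      g 0 * ⟪q, a⟫ + g 1 * ⟪q, b⟫ + g 2 * ⟪q, c⟫ = 0 := by
    intro q
    have hc := congrArg (fun t => ⟪q, t⟫) hg0
    simpa only [inner_add_right, real_inner_smul_right, inner_zero_right] using hc
  have eA : g 0 * R ^ 2 + g 1 * z + g 2 * y = 0 := by
    have := hinner (a)
    rwa [haa, ← hzdef, (real_inner_comm c a).trans hydef.symm] at this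
  have eB : g 0 * z + g 1 * R ^ 2 + g 2 * x = 0 := by
    have := hinner (b)
    rwa [hbb, (real_inner_comm a b).trans hzdef.symm, ← hxdef] at this
  have eC : g 0 * y + g 1 * x + g 2 * R ^ 2 = 0 := by
    have := hinner (c)
    rwa [hcc, ← hydef, (real_inner_comm b c).trans hxdef.symm] at this
  have hgne : g ≠ 0 := by
    intro hgz
    exact hgi (by rw [hgz]; rfl)
  have hmv : (Matrix.of ![![R ^ 2, z, y], ![z, R ^ 2, x], ![y, x, R ^ 2]]).mulVec g = 0 := by
    funext j
    fin_cases j <;>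
      simp [Matrix.mulVec, dotProduct, Fin.sum_univ_three] <;> linarith [eA, eB, eC]
  have hdet : (Matrix.of ![![R ^ 2, z, y], ![z, R ^ 2, x], ![y, x, R ^ 2]]).det = 0 :=
    Matrix.exists_mulVec_eq_zero_iff.mp ⟨g, hgne, hmv⟩
  have hG : R ^ 2 * R ^ 2 * R ^ 2 + 2 * (x * y * z) - R ^ 2 * (x ^ 2 + y ^ 2 + z ^ 2) = 0 := by
    rw [Matrix.det_fin_three] at hdet
    simp only [Matrix.of_apply, Matrix.cons_val_zero, Matrix.cons_val_one, Matrix.head_cons,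
      Matrix.cons_val_two, Matrix.tail_cons, Matrix.head_fin_const] at hdet
    linear_combination hdet
  have hKey : 4 * R ^ 2 * ((R ^ 2 + x - y - z) * (R ^ 2 + y - x - z) * (R ^ 2 + z - x - y)) =
      -(R ^ 2 + (x + y + z)) * (8 * (R ^ 2 - x) * (R ^ 2 - y) * (R ^ 2 - z)) := by
    linear_combination (12 * R ^ 2 - 4 * (x + y + z)) * hG
  have hD : 0 < 8 * (R ^ 2 - x) * (R ^ 2 - y) * (R ^ 2 - z) :=
    mul_pos (mul_pos (by linarith) hRy) hRz
  have hsq : (2 * (u * v * w)) ^ 2 = (R * (R ^ 2 + (x + y + z)) / 2) ^ 2 := by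
    have e : (2 * (u * v * w)) ^ 2 = 4 * (u ^ 2 * (v ^ 2 * w ^ 2)) := by ring
    rw [e, hu2, hv2, hw2]
    linear_combination (1 / 4) * hG
  have huvw0 : 0 ≤ 2 * (u * v * w) := by positivity
  have hsum : ∠ A B C + ∠ A C B + ∠ B A C = π := by
    have hs := EuclideanGeometry.angle_add_angle_add_angle_eq_pi C (hAB.symm)
    rw [EuclideanGeometry.angle_comm B C A, EuclideanGeometry.angle_comm C A B] at hs
    linarith
  refine ⟨?_, ?_, ?_⟩
  · rintro ⟨h1, h2, h3⟩
    have p1 : 0 < R ^ 2 + x - y - z := by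
      have := inner_pos_of_angle_lt hnBA hnCA (by rw [← hangA]; exact h1)
      rwa [hpA] at this
    have p2 : 0 < R ^ 2 + y - x - z := by
      have := inner_pos_of_angle_lt hnAB hnCB (by rw [← hangB]; exact h2)
      rwa [hpB] at this
    have p3 : 0 < R ^ 2 + z - x - y := by
      have := inner_pos_of_angle_lt hnACv hnBCv (by rw [← hangC]; exact h3)
      rwa [hpC] at this
    have hL : 0 < 4 * R ^ 2 * ((R ^ 2 + x - y - z) * (R ^ 2 + y - x - z) * (R ^ 2 + z - x - y)) :=
      mul_pos (by positivity) (mul_pos (mul_pos p1 p2) p3)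
    rw [hKey] at hL
    have hs_neg : R ^ 2 + (x + y + z) < 0 := by
      by_contra hc
      push_neg at hc
      have h8 : 0 ≤ (R ^ 2 + (x + y + z)) *
          (8 * (R ^ 2 - x) * (R ^ 2 - y) * (R ^ 2 - z)) := mul_nonneg hc hD.le
      linarith [hL, h8]
    have h2uvw : 2 * (u * v * w) = -(R * (R ^ 2 + (x + y + z)) / 2) := by
      have hq : 0 ≤ -(R * (R ^ 2 + (x + y + z)) / 2) := by
        have := mul_pos hR (show 0 < -(R ^ 2 + (x + y + z)) by linarith)
        linarith [this]
      have hfac : (2 * (u * v * w) - -(R * (R ^ 2 + (x + y + z)) / 2)) *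
          (2 * (u * v * w) + -(R * (R ^ 2 + (x + y + z)) / 2)) = 0 := by
        linear_combination hsq
      rcases mul_eq_zero.mp hfac with h' | h'
      · linarith
      · linarith
    rw [hu2, hv2, hw2]
    linear_combination -h2uvw
  · intro hcase
    have hprodneg : (R ^ 2 + x - y - z) * (R ^ 2 + y - x - z) * (R ^ 2 + z - x - y) < 0 := by
      have hnn1 := EuclideanGeometry.angle_nonneg A B C
      have hnn2 := EuclideanGeometry.angle_nonneg A C B
      have hnn3 := EuclideanGeometry.angle_nonneg B A C
      rcases hcase with h1 | h1 | h1
      · have p1 : R ^ 2 + x - y - z < 0 := by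
          have := inner_neg_of_angle_gt hnBA hnCA (by rw [← hangA]; exact h1)
          rwa [hpA] at this
        have p2 : 0 < R ^ 2 + y - x - z := by
          have := inner_pos_of_angle_lt hnAB hnCB (by rw [← hangB]; linarith)
          rwa [hpB] at this
        have p3 : 0 < R ^ 2 + z - x - y := by
          have := inner_pos_of_angle_lt hnACv hnBCv (by rw [← hangC]; linarith)
          rwa [hpC] at this
        exact mul_neg_of_neg_of_pos (mul_neg_of_neg_of_pos p1 p2) p3
      · have p1 : R ^ 2 + y - x - z < 0 := by
          have := inner_neg_of_angle_gt hnAB hnCB (by rw [← hangB]; exact h1)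
          rwa [hpB] at this
        have p2 : 0 < R ^ 2 + x - y - z := by
          have := inner_pos_of_angle_lt hnBA hnCA (by rw [← hangA]; linarith)
          rwa [hpA] at this
        have p3 : 0 < R ^ 2 + z - x - y := by
          have := inner_pos_of_angle_lt hnACv hnBCv (by rw [← hangC]; linarith)
          rwa [hpC] at this
        linarith [mul_neg_of_pos_of_neg (mul_pos p2 p3) p1]
      · have p1 : R ^ 2 + z - x - y < 0 := by
          have := inner_neg_of_angle_gt hnACv hnBCv (by rw [← hangC]; exact h1)
          rwa [hpC] at this
        have p2 : 0 < R ^ 2 + x - y - z := by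
          have := inner_pos_of_angle_lt hnBA hnCA (by rw [← hangA]; linarith)
          rwa [hpA] at this
        have p3 : 0 < R ^ 2 + y - x - z := by
          have := inner_pos_of_angle_lt hnAB hnCB (by rw [← hangB]; linarith)
          rwa [hpB] at this
        linarith [mul_neg_of_pos_of_neg (mul_pos p2 p3) p1]
    have hL : -(R ^ 2 + (x + y + z)) * (8 * (R ^ 2 - x) * (R ^ 2 - y) * (R ^ 2 - z)) < 0 := by
      rw [← hKey]
      exact mul_neg_of_pos_of_neg (by positivity) hprodneg
    have hs_pos : 0 < R ^ 2 + (x + y + z) := by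
      by_contra hc
      push_neg at hc
      have h8 : 0 ≤ -(R ^ 2 + (x + y + z)) *
          (8 * (R ^ 2 - x) * (R ^ 2 - y) * (R ^ 2 - z)) :=
        mul_nonneg (by linarith) hD.le
      linarith
    have h2uvw : 2 * (u * v * w) = R * (R ^ 2 + (x + y + z)) / 2 := by
      have hq : 0 ≤ R * (R ^ 2 + (x + y + z)) / 2 := by
        have := mul_pos hR hs_pos
        linarith [this]
      have hfac : (2 * (u * v * w) - R * (R ^ 2 + (x + y + z)) / 2) *
          (2 * (u * v * w) + R * (R ^ 2 + (x + y + z)) / 2) = 0 := by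
        linear_combination hsq
      rcases mul_eq_zero.mp hfac with h' | h'
      · linarith
      · linarith
    rw [hu2, hv2, hw2]
    linear_combination h2uvw
  · intro hcase
    have hprod0 : (R ^ 2 + x - y - z) * (R ^ 2 + y - x - z) * (R ^ 2 + z - x - y) = 0 := by
      rcases hcase with h1 | h1 | h1
      · have p1 : R ^ 2 + x - y - z = 0 := by
          rw [← hpA]
          exact (InnerProductGeometry.inner_eq_zero_iff_angle_eq_pi_div_two _ _).mpr
            (by rw [← hangA]; exact h1)
        rw [p1]; ring
      · have p1 : R ^ 2 + y - x - z = 0 := by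
          rw [← hpB]
          exact (InnerProductGeometry.inner_eq_zero_iff_angle_eq_pi_div_two _ _).mpr
            (by rw [← hangB]; exact h1)
        rw [p1]; ring
      · have p1 : R ^ 2 + z - x - y = 0 := by
          rw [← hpC]
          exact (InnerProductGeometry.inner_eq_zero_iff_angle_eq_pi_div_two _ _).mpr
            (by rw [← hangC]; exact h1)
        rw [p1]; ring
    have hz0 : (R ^ 2 + (x + y + z)) * (8 * (R ^ 2 - x) * (R ^ 2 - y) * (R ^ 2 - z)) = 0 := by
      linear_combination hKey - 4 * R ^ 2 * hprod0
    have hs0 : R ^ 2 + (x + y + z) = 0 := by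
      rcases mul_eq_zero.mp hz0 with h' | h'
      · exact h'
      · exact absurd h' (ne_of_gt hD)
    rw [hu2, hv2, hw2]
    linarith
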